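/- Assume ε satisfies the composition conditions. Let 𝒬_1 ≠ 𝒬_2 be quadrilaterals in F with oriented triangles T_1, T_2 and distinguished points P_1, P_2. Then ε_{P_1 R_1} = ε_{P_2 R_2} for all R_1 ∈ T_1 and all R_2 ∈ T_2. -/

import Mathlib

open Finset

/-- The ambient `𝔽₂`-vector space (the Fano cube); the Fano plane `F` is its set of
nonzero vectors. -/
abbrev V : Type := Fin 3 → ZMod 2

/-- A multiplication factor: a sign `ε P Q ∈ {−1,1}` for each ordered pair `(P,Q)` of
distinct points of the Fano plane with `ε Q P = −ε P Q`, normalised to `0` outside its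
domain of definition. -/
def IsMulFactor (ε : V → V → ℤ) : Prop :=
  (∀ P Q : V, P ≠ 0 → Q ≠ 0 → P ≠ Q → (ε P Q = 1 ∨ ε P Q = -1) ∧ ε Q P = -ε P Q) ∧
  (∀ P Q : V, P = 0 ∨ Q = 0 ∨ P = Q → ε P Q = 0)

/-- A norm on the Fano plane: a map to `{−1,1}` multiplicative on pairs of distinct points. -/
def IsNorm (N : V → ℤ) : Prop :=
  (∀ P : V, P ≠ 0 → N P = 1 ∨ N P = -1) ∧
  (∀ P Q : V, P ≠ 0 → Q ≠ 0 → P ≠ Q → N (P + Q) = N P * N Q)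

/-- A line of the Fano plane: a 3-element set `{P,Q,R}` of nonzero vectors with `P+Q+R=0`. -/
def IsLine (L : Set V) : Prop :=
  ∃ P Q R : V, P ≠ 0 ∧ Q ≠ 0 ∧ R ≠ 0 ∧ P ≠ Q ∧ P ≠ R ∧ Q ≠ R ∧
    P + Q + R = 0 ∧ L = {P, Q, R}

/-- A triangle: a 3-element subset of the Fano plane which is not a line. -/
def IsTriangle (T : Set V) : Prop :=
  ∃ P Q R : V, P ≠ 0 ∧ Q ≠ 0 ∧ R ≠ 0 ∧ P ≠ Q ∧ P ≠ R ∧ Q ≠ R ∧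
    P + Q + R ≠ 0 ∧ T = {P, Q, R}

/-- A quadrilateral: a 4-element subset of the Fano plane containing no line. -/
def IsQuad (S : Set V) : Prop :=
  (∃ P Q R T : V, P ≠ 0 ∧ Q ≠ 0 ∧ R ≠ 0 ∧ T ≠ 0 ∧
    P ≠ Q ∧ P ≠ R ∧ P ≠ T ∧ Q ≠ R ∧ Q ≠ T ∧ R ≠ T ∧ S = {P, Q, R, T}) ∧
  (∀ L : Set V, IsLine L → ¬ L ⊆ S)

/-- The future of a point `P`: the points `Q` of the Fano plane with `ε P Q = 1`. -/
def Future (ε : V → V → ℤ) (P : V) : Set V := {Q : V | Q ≠ 0 ∧ Q ≠ P ∧ ε P Q = 1}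

/-- The past of a point `P`: the points `Q` of the Fano plane with `ε P Q = −1`. -/
def Past (ε : V → V → ℤ) (P : V) : Set V := {Q : V | Q ≠ 0 ∧ Q ≠ P ∧ ε P Q = -1}

/-- The composition conditions (C1) and (C2) on a multiplication factor. -/
def CompCond (ε : V → V → ℤ) : Prop :=
  (∀ P Q R : V, P ≠ 0 → Q ≠ 0 → R ≠ 0 → P ≠ Q → P ≠ R → Q ≠ R → P + Q + R = 0 →
    ε P Q * ε Q R = 1) ∧
  (∀ P Q R S : V, P ≠ 0 → Q ≠ 0 → R ≠ 0 → S ≠ 0 →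
    P ≠ Q → P ≠ R → P ≠ S → Q ≠ R → Q ≠ S → R ≠ S → IsQuad {P, Q, R, S} →
    ε P Q * ε Q R * ε R S * ε S P = -1)

/-- An oriented triangle `{P,Q,R}`: one with `ε P Q = ε Q R = ε R P`. -/
def OrientedTri (ε : V → V → ℤ) (T : Set V) : Prop :=
  ∃ P Q R : V, T = {P, Q, R} ∧ P ≠ Q ∧ P ≠ R ∧ Q ≠ R ∧
    ε P Q = ε Q R ∧ ε Q R = ε R P

/-- `P` is the distinguished point of the quadrilateral `S`: the point of `S` whose
complement in `S` is the oriented triangle of `S`. -/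
def IsDistPt (ε : V → V → ℤ) (S : Set V) (P : V) : Prop :=
  P ∈ S ∧ IsTriangle (S \ {P}) ∧ OrientedTri ε (S \ {P})

/-- A family of subsets of the Fano plane satisfies the Fano axioms if two distinct points
lie in exactly one member and two distinct members meet in exactly one point. -/
def FanoFamily (Δ : Set (Set V)) : Prop :=
  (∀ P Q : V, P ≠ 0 → Q ≠ 0 → P ≠ Q → ∃! T, T ∈ Δ ∧ P ∈ T ∧ Q ∈ T) ∧
  (∀ T₁ T₂ : Set V, T₁ ∈ Δ → T₂ ∈ Δ → T₁ ≠ T₂ → ∃! X : V, X ∈ T₁ ∩ T₂)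

/-- An `n`-oriented map: `α_P(P) + n(P) = 1` on the Fano plane and
`α_P(Q) + α_Q(P) = 1` for distinct points; normalised by `α 0 = 0`. -/
def IsNOrientedMap (n : V →ₗ[ZMod 2] ZMod 2) (α : V → V →ₗ[ZMod 2] ZMod 2) : Prop :=
  (∀ P : V, P ≠ 0 → α P P + n P = 1) ∧
  (∀ P Q : V, P ≠ 0 → Q ≠ 0 → P ≠ Q → α P Q + α Q P = 1) ∧
  α 0 = 0

/-- An oriented map is a `0`-oriented map. -/
def IsOrientedMap (α : V → V →ₗ[ZMod 2] ZMod 2) : Prop := IsNOrientedMap 0 α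

/-- The exponential `e : ZMod 2 → {−1,1}`, `e^0 = 1`, `e^1 = −1`. -/
def eSign (x : ZMod 2) : ℤ := if x = 0 then 1 else -1

/-- The multiplication factor `e^α` associated to an (`n`-)oriented map `α`. -/
def expMap (α : V → V →ₗ[ZMod 2] ZMod 2) : V → V → ℤ :=
  fun P Q => if P ≠ 0 ∧ Q ≠ 0 ∧ P ≠ Q then eSign (α P Q) else 0

/-- The set `Δ_P = {Q ∈ F : Q ≠ P, α_P(Q) = 1}` associated to an oriented map. -/
def DeltaSet (α : V → V →ₗ[ZMod 2] ZMod 2) (P : V) : Set V :=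
  {Q : V | Q ≠ 0 ∧ Q ≠ P ∧ α P Q = 1}

/-- The map `α ↦ α′`, `α′_P = α_P + n(P)·n`. -/
def nTransform (n : V →ₗ[ZMod 2] ZMod 2) (α : V → V →ₗ[ZMod 2] ZMod 2) :
    V → V →ₗ[ZMod 2] ZMod 2 :=
  fun P => α P + n P • n

/-- The norm `e^{n}` on the Fano plane associated to a linear form `n`. -/
def NormOf (n : V →ₗ[ZMod 2] ZMod 2) : V → ℤ := fun P => eSign (n P)

/-- Structure constants of the octonion-type multiplication on `O_F` determined by a norm `N`
and a multiplication factor `ε`: `e_0` is a two-sided unit, `e_P ⬝ e_P = −N(P) e_0` and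
`e_P ⬝ e_Q = ε_{PQ} e_{P+Q}` for distinct points `P`, `Q` of the Fano plane. -/
def structC (𝔽 : Type*) [Field 𝔽] (N : V → ℤ) (ε : V → V → ℤ) (P Q : V) : 𝔽 :=
  if P = 0 ∨ Q = 0 then 1
  else if P = Q then -(N P : 𝔽)
  else (ε P Q : 𝔽)

/-- The bilinear multiplication on `O_F = (V → 𝔽)` with the above structure constants
(in `V` we have `X = Y + Z ↔ Z = X + Y`). -/
def octMul (𝔽 : Type*) [Field 𝔽] (N : V → ℤ) (ε : V → V → ℤ) (Z W : V → 𝔽) : V → 𝔽 :=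
  fun X => ∑ Y : V, structC 𝔽 N ε Y (X + Y) * Z Y * W (X + Y)

/-- The quadratic form `N_O` on `O_F`. -/
def octNorm (𝔽 : Type*) [Field 𝔽] (N : V → ℤ) (Z : V → 𝔽) : 𝔽 :=
  ∑ X : V, (if X = 0 then 1 else (N X : 𝔽)) * Z X ^ 2

/-- `(O_F, N, ε)` is a composition algebra: `N_O(Z ⬝ W) = N_O(Z) N_O(W)`. -/
def IsCompAlg (𝔽 : Type*) [Field 𝔽] (N : V → ℤ) (ε : V → V → ℤ) : Prop :=
  ∀ Z W : V → 𝔽, octNorm 𝔽 N (octMul 𝔽 N ε Z W) = octNorm 𝔽 N Z * octNorm 𝔽 N W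

lemma ch2 (v : V) : v + v = 0 := by
  funext i; exact CharTwo.add_self_eq_zero _

lemma eqd (u w : V) (h : u + w = 0) : u = w := by
  have h2 : u + (w + w) = 0 + w := by rw [← add_assoc, h]
  simpa [ch2] using h2

lemma addne (u w : V) (hw : w ≠ 0) : u ≠ u + w := by
  intro h
  exact hw (add_left_cancel (a := u) (by simpa using h)).symm

lemma addne' (u w : V) (hu : u ≠ 0) : w ≠ u + w := by
  intro h
  exact hu (by simpa using (add_right_cancel (b := w) (by simpa using h)).symm)

lemma muleq (e f : ℤ) (he : e = 1 ∨ e = -1) (hf : f = 1 ∨ f = -1) (h : e * f = 1) : e = f := by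
  rcases he with rfl|rfl <;> rcases hf with rfl|rfl <;> simp_all

lemma val {ε : V → V → ℤ} (hε : IsMulFactor ε) (P Q : V) (h1 : P ≠ 0) (h2 : Q ≠ 0)
    (h3 : P ≠ Q) : ε P Q = 1 ∨ ε P Q = -1 := (hε.1 P Q h1 h2 h3).1

lemma anti {ε : V → V → ℤ} (hε : IsMulFactor ε) (P Q : V) (h1 : P ≠ 0) (h2 : Q ≠ 0)
    (h3 : P ≠ Q) : ε Q P = -ε P Q := (hε.1 P Q h1 h2 h3).2

lemma cyc {ε : V → V → ℤ} (hε : IsMulFactor ε) (hc : CompCond ε) (P Q : V)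
    (h1 : P ≠ 0) (h2 : Q ≠ 0) (h3 : P ≠ Q) : ε P Q = ε Q (P + Q) := by
  have h0 : P + Q ≠ 0 := fun h => h3 (eqd _ _ h)
  have hPn : P ≠ P + Q := addne _ _ h2
  have hQn : Q ≠ P + Q := addne' _ _ h1
  have h := hc.1 P Q (P + Q) h1 h2 h0 h3 hPn hQn (ch2 _)
  exact muleq _ _ (val hε P Q h1 h2 h3) (val hε Q (P + Q) h2 h0 hQn) h

lemma cyc2 {ε : V → V → ℤ} (hε : IsMulFactor ε) (hc : CompCond ε) (P Q : V)
    (h1 : P ≠ 0) (h2 : Q ≠ 0) (h3 : P ≠ Q) : ε P (P + Q) = -ε P Q := by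
  have h0 : P + Q ≠ 0 := fun h => h3 (eqd _ _ h)
  have hQn : Q ≠ P + Q := addne' _ _ h1
  have ha := cyc hε hc P Q h1 h2 h3
  have hb := cyc hε hc Q (P + Q) h2 h0 hQn
  rw [show Q + (P + Q) = P + (Q + Q) from by abel, ch2, add_zero] at hb
  have hanti := anti hε P (P + Q) h1 h0 (addne _ _ h2)
  omega

lemma quadNonzero (S : Set V) (hS : IsQuad S) : ∀ w ∈ S, w ≠ 0 := by
  obtain ⟨⟨P, Q, R, T, h0P, h0Q, h0R, h0T, _, _, _, _, _, _, hset⟩, -⟩ := hS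
  intro w hw
  rw [hset] at hw
  simp only [Set.mem_insert_iff, Set.mem_singleton_iff] at hw
  rcases hw with rfl|rfl|rfl|rfl <;> assumption

lemma noline (S : Set V) (hS : IsQuad S) (u w : V) (hu : u ∈ S) (hw : w ∈ S)
    (huw : u ≠ w) : u + w ∉ S := by
  intro hmem
  have h0u := quadNonzero S hS u hu
  have h0w := quadNonzero S hS w hw
  have h0uw : u + w ≠ 0 := fun h => huw (eqd _ _ h)
  exact hS.2 {u, w, u + w}
    ⟨u, w, u + w, h0u, h0w, h0uw, huw, addne u w h0w, addne' u w h0u, ch2 _, rfl⟩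
    (by
      intro t ht
      simp only [Set.mem_insert_iff, Set.mem_singleton_iff] at ht
      rcases ht with rfl|rfl|rfl <;> assumption)

lemma huniv (p a b c : V)
    (h0p : p ≠ 0) (h0a : a ≠ 0) (h0b : b ≠ 0) (h0c : c ≠ 0)
    (hpa : p ≠ a) (hpb : p ≠ b) (hpc : p ≠ c)
    (hab : a ≠ b) (hac : a ≠ c) (hbc : b ≠ c)
    (hnab : p + a ≠ b) (hnac : p + a ≠ c)
    (hnba : p + b ≠ a) (hnbc : p + b ≠ c)
    (hnca : p + c ≠ a) (hncb : p + c ≠ b) :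
    ∀ Z : V, Z = 0 ∨ Z = p ∨ Z = a ∨ Z = b ∨ Z = c ∨ Z = p + a ∨ Z = p + b ∨ Z = p + c := by
  have e1 : p + a ≠ 0 := fun h => hpa (eqd _ _ h)
  have e2 : p + b ≠ 0 := fun h => hpb (eqd _ _ h)
  have e3 : p + c ≠ 0 := fun h => hpc (eqd _ _ h)
  have huniqc : ({0, p, a, b, c, p + a, p + b, p + c} : Finset V) = Finset.univ := by
    apply Finset.eq_univ_of_card
    rw [show Fintype.card V = 8 from rfl]
    rw [Finset.card_insert_of_notMem (by
      simp only [Finset.mem_insert, Finset.mem_singleton]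
      push_neg
      exact ⟨Ne.symm h0p, Ne.symm h0a, Ne.symm h0b, Ne.symm h0c,
        Ne.symm e1, Ne.symm e2, Ne.symm e3⟩)]
    rw [Finset.card_insert_of_notMem (by
      simp only [Finset.mem_insert, Finset.mem_singleton]
      push_neg
      exact ⟨hpa, hpb, hpc, addne p a h0a, addne p b h0b, addne p c h0c⟩)]
    rw [Finset.card_insert_of_notMem (by
      simp only [Finset.mem_insert, Finset.mem_singleton]
      push_neg
      exact ⟨hab, hac, addne' p a h0p, Ne.symm hnba, Ne.symm hnca⟩)]
    rw [Finset.card_insert_of_notMem (by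
      simp only [Finset.mem_insert, Finset.mem_singleton]
      push_neg
      exact ⟨hbc, Ne.symm hnab, addne' p b h0p, Ne.symm hncb⟩)]
    rw [Finset.card_insert_of_notMem (by
      simp only [Finset.mem_insert, Finset.mem_singleton]
      push_neg
      exact ⟨Ne.symm hnac, Ne.symm hnbc, addne' p c h0p⟩)]
    rw [Finset.card_insert_of_notMem (by
      simp only [Finset.mem_insert, Finset.mem_singleton]
      push_neg
      exact ⟨fun h => hab (by exact add_left_cancel h), fun h => hac (by exact add_left_cancel h)⟩)]
    rw [Finset.card_insert_of_notMem (by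
      simp only [Finset.mem_singleton]
      exact fun h => hbc (by exact add_left_cancel h))]
    rfl
  intro Z
  have : Z ∈ ({0, p, a, b, c, p + a, p + b, p + c} : Finset V) := huniqc ▸ Finset.mem_univ Z
  simpa using this

lemma sum3 (x y z u v w : V) (hxy : x ≠ y) (hxz : x ≠ z) (hyz : y ≠ z)
    (hx : x = u ∨ x = v ∨ x = w) (hy : y = u ∨ y = v ∨ y = w)
    (hz : z = u ∨ z = v ∨ z = w) : x + y + z = u + v + w := by
  rcases hx with rfl|rfl|rfl <;> rcases hy with rfl|rfl|rfl <;> rcases hz with rfl|rfl|rfl <;>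
    first
      | exact (hxy rfl).elim
      | exact (hxz rfl).elim
      | exact (hyz rfl).elim
      | abel

lemma perquad {ε : V → V → ℤ} (hε : IsMulFactor ε) (hc : CompCond ε)
    (P a b c : V) (h0P : P ≠ 0) (h0a : a ≠ 0) (h0b : b ≠ 0) (h0c : c ≠ 0)
    (hPa : P ≠ a) (hPb : P ≠ b) (hPc : P ≠ c) (hab : a ≠ b) (hac : a ≠ c) (hbc : b ≠ c)
    (hquad : IsQuad {P, a, b, c})
    (hori : ε a b = ε b c ∧ ε b c = ε c a) :
    ε P a = ε P b ∧ ε P a = ε P c := by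
  have hquad2 : IsQuad {P, b, c, a} := by
    rwa [show ({P, b, c, a} : Set V) = {P, a, b, c} from by ext t; simp; tauto]
  have hC1 := hc.2 P a b c h0P h0a h0b h0c hPa hPb hPc hab hac hbc hquad
  have hC2 := hc.2 P b c a h0P h0b h0c h0a hPb hPc hPa hbc (Ne.symm hab) (Ne.symm hac) hquad2
  have haP : ε a P = -ε P a := anti hε P a h0P h0a hPa
  have hcP : ε c P = -ε P c := anti hε P c h0P h0c hPc
  have hca : ε c a = -ε a c := anti hε a c h0a h0c hac
  rw [hori.1, hcP] at hC1
  rw [hori.2, hca, haP] at hC2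
  constructor
  ·
    rcases val hε a c h0a h0c hac with h|h <;> rw [h] at hC2 <;>
      rcases val hε P a h0P h0a hPa with h1|h1 <;> rw [h1] at hC2 ⊢ <;>
      rcases val hε P b h0P h0b hPb with h2|h2 <;> rw [h2] at hC2 ⊢ <;> norm_num at hC2
  · rcases val hε b c h0b h0c hbc with h|h <;> rw [h] at hC1 <;>
      rcases val hε P a h0P h0a hPa with h1|h1 <;> rw [h1] at hC1 ⊢ <;>
      rcases val hε P c h0P h0c hPc with h2|h2 <;> rw [h2] at hC1 ⊢ <;> norm_num at hC1

set_option maxHeartbeats 1000000 in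
/-- Case: the distinguished point of the second quadrilateral lies in the triangle
of the first one (`Q = a`). -/
lemma case1 {ε : V → V → ℤ} (hε : IsMulFactor ε) (hc : CompCond ε)
    (P a b c x y z : V)
    (h0P : P ≠ 0) (h0a : a ≠ 0) (h0b : b ≠ 0) (h0c : c ≠ 0)
    (h0x : x ≠ 0) (h0y : y ≠ 0) (h0z : z ≠ 0)
    (hPa : P ≠ a) (hPb : P ≠ b) (hPc : P ≠ c) (hab : a ≠ b) (hac : a ≠ c) (hbc : b ≠ c)
    (hxy : x ≠ y) (hxz : x ≠ z) (hyz : y ≠ z)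
    (hax : a ≠ x) (hay : a ≠ y) (haz : a ≠ z)
    (hsum1 : P + a + b + c = 0)
    (htri2 : x + y + z ≠ 0)
    (hori1 : ε a b = ε b c ∧ ε b c = ε c a)
    (hσ1 : ε P a = 1 ∧ ε P b = 1 ∧ ε P c = 1)
    (hσ2 : ε a x = -1 ∧ ε a y = -1 ∧ ε a z = -1)
    (huniv1 : ∀ Z : V, Z = 0 ∨ Z = P ∨ Z = a ∨ Z = b ∨ Z = c ∨
      Z = P + a ∨ Z = P + b ∨ Z = P + c)
    (hneS : (insert P {a, b, c} : Set V) ≠ insert a {x, y, z}) : False := by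
  obtain ⟨hs1a, hs1b, hs1c⟩ := hσ1
  obtain ⟨hs2x, hs2y, hs2z⟩ := hσ2
  have hba : b + a = P + c := eqd _ _ (by rw [show b + a + (P + c) = P + a + b + c from by abel, hsum1])
  have hca : c + a = P + b := eqd _ _ (by rw [show c + a + (P + b) = P + a + b + c from by abel, hsum1])
  have m2 : ε a (P + a) = 1 := by rw [← cyc hε hc P a h0P h0a hPa]; exact hs1a
  have m3 : ε a (P + b) = ε c a := by
    have h := cyc hε hc c a h0c h0a (Ne.symm hac); rw [hca] at h; exact h.symm
  have m4 : ε a (P + c) = ε b a := by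
    have h := cyc hε hc b a h0b h0a (Ne.symm hab); rw [hba] at h; exact h.symm
  have aab : ε b a = -ε a b := anti hε a b h0a h0b hab
  have aac : ε c a = -ε a c := anti hε a c h0a h0c hac
  rcases val hε a b h0a h0b hab with hvb|hvb <;> rcases val hε a c h0a h0c hac with hvc|hvc
  · -- ε a b = 1, ε a c = 1 : contradicts orientedness of {a,b,c}
    obtain ⟨ho1, ho2⟩ := hori1; omega
  · -- ε a b = 1, ε a c = -1 : T₂ ⊆ {P, c, P+c} which sums to 0
    have hmem : ∀ t : V, t ≠ 0 → a ≠ t → ε a t = -1 → (t = P ∨ t = c ∨ t = P + c) := by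
      intro t ht0 hat hts
      have haP' : ε a P = -1 := by have := anti hε P a h0P h0a hPa; omega
      rcases huniv1 t with rfl|rfl|rfl|rfl|rfl|rfl|rfl|rfl
      · exact absurd rfl ht0
      · exact Or.inl rfl
      · exact absurd rfl hat
      · omega
      · exact Or.inr (Or.inl rfl)
      · omega
      · omega
      · exact Or.inr (Or.inr rfl)
    have hs := sum3 x y z P c (P + c) hxy hxz hyz (hmem x h0x hax hs2x)
      (hmem y h0y hay hs2y) (hmem z h0z haz hs2z)
    apply htri2
    rw [hs, show P + c + (P + c) = (P + P) + (c + c) from by abel, ch2, ch2, add_zero]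
  · -- ε a b = -1, ε a c = 1 : T₂ ⊆ {P, b, P+b} which sums to 0
    have hmem : ∀ t : V, t ≠ 0 → a ≠ t → ε a t = -1 → (t = P ∨ t = b ∨ t = P + b) := by
      intro t ht0 hat hts
      have haP' : ε a P = -1 := by have := anti hε P a h0P h0a hPa; omega
      rcases huniv1 t with rfl|rfl|rfl|rfl|rfl|rfl|rfl|rfl
      · exact absurd rfl ht0
      · exact Or.inl rfl
      · exact absurd rfl hat
      · exact Or.inr (Or.inl rfl)
      · omega
      · omega
      · exact Or.inr (Or.inr rfl)
      · omega
    have hs := sum3 x y z P b (P + b) hxy hxz hyz (hmem x h0x hax hs2x)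
      (hmem y h0y hay hs2y) (hmem z h0z haz hs2z)
    apply htri2
    rw [hs, show P + b + (P + b) = (P + P) + (b + b) from by abel, ch2, ch2, add_zero]
  · -- ε a b = -1, ε a c = -1 : then S₂ = S₁
    have hmem : ∀ t : V, t ≠ 0 → a ≠ t → ε a t = -1 → (t = P ∨ t = b ∨ t = c) := by
      intro t ht0 hat hts
      have haP' : ε a P = -1 := by have := anti hε P a h0P h0a hPa; omega
      rcases huniv1 t with rfl|rfl|rfl|rfl|rfl|rfl|rfl|rfl
      · exact absurd rfl ht0
      · exact Or.inl rfl
      · exact absurd rfl hat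
      · exact Or.inr (Or.inl rfl)
      · exact Or.inr (Or.inr rfl)
      · omega
      · omega
      · omega
    have hx := hmem x h0x hax hs2x
    have hy := hmem y h0y hay hs2y
    have hz := hmem z h0z haz hs2z
    rcases hx with rfl|rfl|rfl <;> rcases hy with rfl|rfl|rfl <;> rcases hz with rfl|rfl|rfl <;>
      first
        | exact hxy rfl
        | exact hxz rfl
        | exact hyz rfl
        | exact hneS (by ext t; simp only [Set.mem_insert_iff, Set.mem_singleton_iff]; tauto)

set_option maxHeartbeats 1000000 in
/-- Case: the distinguished point of the second quadrilateral is `P + a`, a point of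
the complement line of the first quadrilateral. -/
lemma case2 {ε : V → V → ℤ} (hε : IsMulFactor ε) (hc : CompCond ε)
    (P a b c x y z : V)
    (h0P : P ≠ 0) (h0a : a ≠ 0) (h0b : b ≠ 0) (h0c : c ≠ 0)
    (h0x : x ≠ 0) (h0y : y ≠ 0) (h0z : z ≠ 0)
    (hPa : P ≠ a) (hPb : P ≠ b) (hPc : P ≠ c) (hab : a ≠ b) (hac : a ≠ c) (hbc : b ≠ c)
    (hxy : x ≠ y) (hxz : x ≠ z) (hyz : y ≠ z)
    (hDx : P + a ≠ x) (hDy : P + a ≠ y) (hDz : P + a ≠ z)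
    (hsum1 : P + a + b + c = 0)
    (htri2 : x + y + z ≠ 0)
    (hori1 : ε a b = ε b c ∧ ε b c = ε c a)
    (hori2 : ε x y = ε y z ∧ ε y z = ε z x)
    (hσ1 : ε P a = 1 ∧ ε P b = 1 ∧ ε P c = 1)
    (hσ2 : ε (P + a) x = -1 ∧ ε (P + a) y = -1 ∧ ε (P + a) z = -1)
    (huniv1 : ∀ Z : V, Z = 0 ∨ Z = P ∨ Z = a ∨ Z = b ∨ Z = c ∨
      Z = P + a ∨ Z = P + b ∨ Z = P + c) : False := by
  obtain ⟨hs1a, hs1b, hs1c⟩ := hσ1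
  obtain ⟨hs2x, hs2y, hs2z⟩ := hσ2
  obtain ⟨ho1, ho2⟩ := hori1
  have hD0 : P + a ≠ 0 := fun h => hPa (eqd _ _ h)
  have hB0 : P + b ≠ 0 := fun h => hPb (eqd _ _ h)
  have hC0 : P + c ≠ 0 := fun h => hPc (eqd _ _ h)
  have hba : b + a = P + c := eqd _ _ (by rw [show b + a + (P + c) = P + a + b + c from by abel, hsum1])
  have hca : c + a = P + b := eqd _ _ (by rw [show c + a + (P + b) = P + a + b + c from by abel, hsum1])
  have hbc' : b + c = P + a := eqd _ _ (by rw [show b + c + (P + a) = P + a + b + c from by abel, hsum1])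
  have hcb' : c + b = P + a := by rw [add_comm]; exact hbc'
  -- various distinctness facts
  have hbD : b ≠ P + a := fun h => h0c (add_left_cancel (a := b) (by rw [hbc', ← h, add_zero]))
  have hcD : c ≠ P + a := fun h => h0b (by
    have : b + c = c := by rw [hbc', ← h]
    simpa using (add_right_cancel (b := c) (by simpa using this)))
  have haB : a ≠ P + b := fun h =>
    h0c (add_right_cancel (b := a) (show c + a = 0 + a by rw [zero_add, hca, ← h]))
  have haC : a ≠ P + c := fun h =>
    h0b (add_right_cancel (b := a) (show b + a = 0 + a by rw [zero_add, hba, ← h]))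
  have hcC : c ≠ P + c := addne' _ _ h0P
  have hbB : b ≠ P + b := addne' _ _ h0P
  have hDB : P + a ≠ P + b := fun h => hab (add_left_cancel h)
  have hDC : P + a ≠ P + c := fun h => hac (add_left_cancel h)
  have hBC : P + b ≠ P + c := fun h => hbc (add_left_cancel h)
  -- ε values from the point P + a
  have e1 : ε (P + a) P = 1 := by
    have h := cyc2 hε hc P a h0P h0a hPa
    have h2 := anti hε P (P + a) h0P hD0 (addne P a h0a)
    omega
  have e2 : ε (P + a) a = -1 := by
    have h := cyc hε hc P a h0P h0a hPa
    have h2 := anti hε a (P + a) h0a hD0 (addne' P a h0P)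
    omega
  have e3 : ε (P + a) b = ε b c := by
    have h := cyc hε hc c b h0c h0b (Ne.symm hbc)
    rw [hcb'] at h
    have h2 := anti hε b c h0b h0c hbc
    have h3 := anti hε b (P + a) h0b hD0 hbD
    omega
  have e4 : ε (P + a) c = -ε b c := by
    have h := cyc hε hc b c h0b h0c hbc
    rw [hbc'] at h
    have h3 := anti hε c (P + a) h0c hD0 hcD
    omega
  have e5 : ε (P + a) (P + c) = -ε (P + a) (P + b) := by
    have h := cyc hε hc (P + c) (P + a) hC0 hD0 (Ne.symm hDC)
    rw [show P + c + (P + a) = c + a + (P + P) from by abel, ch2, add_zero, hca] at h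
    have h2 := anti hε (P + a) (P + c) hD0 hC0 hDC
    omega
  -- values inside the triangles
  have f5 : ε c (P + c) = 1 := by rw [← cyc hε hc P c h0P h0c hPc]; exact hs1c
  have f2 : ε a (P + c) = ε b a := by
    have h := cyc hε hc b a h0b h0a (Ne.symm hab); rw [hba] at h; exact h.symm
  have g5 : ε b (P + b) = 1 := by rw [← cyc hε hc P b h0P h0b hPb]; exact hs1b
  have g2 : ε a (P + b) = ε c a := by
    have h := cyc hε hc c a h0c h0a (Ne.symm hac); rw [hca] at h; exact h.symm
  have aab : ε b a = -ε a b := anti hε a b h0a h0b hab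
  have aac : ε c a = -ε a c := anti hε a c h0a h0c hac
  have aaC : ε (P + c) a = -ε a (P + c) := anti hε a (P + c) h0a hC0 haC
  have aaB : ε (P + b) a = -ε a (P + b) := anti hε a (P + b) h0a hB0 haB
  have acC : ε (P + c) c = -ε c (P + c) := anti hε c (P + c) h0c hC0 hcC
  have abB : ε (P + b) b = -ε b (P + b) := anti hε b (P + b) h0b hB0 hbB
  have aca : ε c a = -ε a c := aac
  rcases val hε b c h0b h0c hbc with hs|hs <;>
    rcases val hε (P + a) (P + b) hD0 hB0 hDB with hu|hu
  · -- s = 1, u = 1 : T₂ ⊆ {a, c, P + c}; orientedness contradiction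
    have hmem : ∀ t : V, t ≠ 0 → P + a ≠ t → ε (P + a) t = -1 → (t = a ∨ t = c ∨ t = P + c) := by
      intro t ht0 hDt hts
      rcases huniv1 t with rfl|rfl|rfl|rfl|rfl|rfl|rfl|rfl
      · exact absurd rfl ht0
      · omega
      · exact Or.inl rfl
      · omega
      · exact Or.inr (Or.inl rfl)
      · exact absurd rfl hDt
      · omega
      · exact Or.inr (Or.inr rfl)
    have hx := hmem x h0x hDx hs2x
    have hy := hmem y h0y hDy hs2y
    have hz := hmem z h0z hDz hs2z
    rcases hx with rfl|rfl|rfl <;> rcases hy with rfl|rfl|rfl <;> rcases hz with rfl|rfl|rfl <;>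
      first
        | exact hxy rfl
        | exact hxz rfl
        | exact hyz rfl
        | (obtain ⟨hp1, hp2⟩ := hori2; omega)
  · -- s = 1, u = -1 : T₂ ⊆ {a, c, P + b} which sums to 0
    have hmem : ∀ t : V, t ≠ 0 → P + a ≠ t → ε (P + a) t = -1 → (t = a ∨ t = c ∨ t = P + b) := by
      intro t ht0 hDt hts
      rcases huniv1 t with rfl|rfl|rfl|rfl|rfl|rfl|rfl|rfl
      · exact absurd rfl ht0
      · omega
      · exact Or.inl rfl
      · omega
      · exact Or.inr (Or.inl rfl)
      · exact absurd rfl hDt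
      · exact Or.inr (Or.inr rfl)
      · omega
    have hsx := sum3 x y z a c (P + b) hxy hxz hyz (hmem x h0x hDx hs2x)
      (hmem y h0y hDy hs2y) (hmem z h0z hDz hs2z)
    apply htri2
    rw [hsx, show a + c + (P + b) = (c + a) + (P + b) from by abel, hca, ch2]
  · -- s = -1, u = 1 : T₂ ⊆ {a, b, P + c} which sums to 0
    have hmem : ∀ t : V, t ≠ 0 → P + a ≠ t → ε (P + a) t = -1 → (t = a ∨ t = b ∨ t = P + c) := by
      intro t ht0 hDt hts
      rcases huniv1 t with rfl|rfl|rfl|rfl|rfl|rfl|rfl|rfl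
      · exact absurd rfl ht0
      · omega
      · exact Or.inl rfl
      · exact Or.inr (Or.inl rfl)
      · omega
      · exact absurd rfl hDt
      · omega
      · exact Or.inr (Or.inr rfl)
    have hsx := sum3 x y z a b (P + c) hxy hxz hyz (hmem x h0x hDx hs2x)
      (hmem y h0y hDy hs2y) (hmem z h0z hDz hs2z)
    apply htri2
    rw [hsx, show a + b + (P + c) = (b + a) + (P + c) from by abel, hba, ch2]
  · -- s = -1, u = -1 : T₂ ⊆ {a, b, P + b}; orientedness contradiction
    have hmem : ∀ t : V, t ≠ 0 → P + a ≠ t → ε (P + a) t = -1 → (t = a ∨ t = b ∨ t = P + b) := by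
      intro t ht0 hDt hts
      rcases huniv1 t with rfl|rfl|rfl|rfl|rfl|rfl|rfl|rfl
      · exact absurd rfl ht0
      · omega
      · exact Or.inl rfl
      · exact Or.inr (Or.inl rfl)
      · omega
      · exact absurd rfl hDt
      · exact Or.inr (Or.inr rfl)
      · omega
    have hx := hmem x h0x hDx hs2x
    have hy := hmem y h0y hDy hs2y
    have hz := hmem z h0z hDz hs2z
    rcases hx with rfl|rfl|rfl <;> rcases hy with rfl|rfl|rfl <;> rcases hz with rfl|rfl|rfl <;>
      first
        | exact hxy rfl
        | exact hxz rfl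
        | exact hyz rfl
        | (obtain ⟨hp1, hp2⟩ := hori2; omega)

set_option maxHeartbeats 2000000 in
/-- Key lemma: there cannot be one quadrilateral of "future" type (σ = 1) and another
one of "past" type (σ = -1). -/
lemma key {ε : V → V → ℤ} (hε : IsMulFactor ε) (hc : CompCond ε)
    (P a b c Q x y z : V)
    (h0P : P ≠ 0) (h0a : a ≠ 0) (h0b : b ≠ 0) (h0c : c ≠ 0)
    (h0Q : Q ≠ 0) (h0x : x ≠ 0) (h0y : y ≠ 0) (h0z : z ≠ 0)
    (hPa : P ≠ a) (hPb : P ≠ b) (hPc : P ≠ c) (hab : a ≠ b) (hac : a ≠ c) (hbc : b ≠ c)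
    (hxy : x ≠ y) (hxz : x ≠ z) (hyz : y ≠ z)
    (hQx : Q ≠ x) (hQy : Q ≠ y) (hQz : Q ≠ z)
    (hsum1 : P + a + b + c = 0)
    (htri2 : x + y + z ≠ 0)
    (hori1 : ε a b = ε b c ∧ ε b c = ε c a)
    (hori2 : ε x y = ε y z ∧ ε y z = ε z x)
    (hσ1 : ε P a = 1 ∧ ε P b = 1 ∧ ε P c = 1)
    (hσ2 : ε Q x = -1 ∧ ε Q y = -1 ∧ ε Q z = -1)
    (huniv1 : ∀ Z : V, Z = 0 ∨ Z = P ∨ Z = a ∨ Z = b ∨ Z = c ∨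
      Z = P + a ∨ Z = P + b ∨ Z = P + c)
    (hneS : (insert P {a, b, c} : Set V) ≠ insert Q {x, y, z}) : False := by
  obtain ⟨hs1a, hs1b, hs1c⟩ := hσ1
  obtain ⟨hs2x, hs2y, hs2z⟩ := hσ2
  have hsum1' : P + b + c + a = 0 := by rw [show P + b + c + a = P + a + b + c from by abel]; exact hsum1
  have hsum1'' : P + c + a + b = 0 := by rw [show P + c + a + b = P + a + b + c from by abel]; exact hsum1
  have hori1' : ε b c = ε c a ∧ ε c a = ε a b := ⟨hori1.2, (hori1.1.trans hori1.2).symm⟩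
  have hori1'' : ε c a = ε a b ∧ ε a b = ε b c := ⟨(hori1.1.trans hori1.2).symm, hori1.1⟩
  have huniv1' : ∀ Z : V, Z = 0 ∨ Z = P ∨ Z = b ∨ Z = c ∨ Z = a ∨
      Z = P + b ∨ Z = P + c ∨ Z = P + a := by
    intro Z; rcases huniv1 Z with h|h|h|h|h|h|h|h <;> tauto
  have huniv1'' : ∀ Z : V, Z = 0 ∨ Z = P ∨ Z = c ∨ Z = a ∨ Z = b ∨
      Z = P + c ∨ Z = P + a ∨ Z = P + b := by
    intro Z; rcases huniv1 Z with h|h|h|h|h|h|h|h <;> tauto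
  rcases huniv1 Q with rfl|rfl|rfl|rfl|rfl|rfl|rfl|rfl
  · exact h0Q rfl
  · -- Q = P (P has been renamed to Q) : the past of Q is the complement line, sum 0
    have hmem : ∀ t : V, t ≠ 0 → Q ≠ t → ε Q t = -1 → (t = Q + a ∨ t = Q + b ∨ t = Q + c) := by
      intro t ht0 hPt hts
      rcases huniv1 t with rfl|rfl|rfl|rfl|rfl|rfl|rfl|rfl
      · exact absurd rfl ht0
      · exact absurd rfl hPt
      · omega
      · omega
      · omega
      · exact Or.inl rfl
      · exact Or.inr (Or.inl rfl)
      · exact Or.inr (Or.inr rfl)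
    have hsx := sum3 x y z (Q + a) (Q + b) (Q + c) hxy hxz hyz (hmem x h0x hQx hs2x)
      (hmem y h0y hQy hs2y) (hmem z h0z hQz hs2z)
    apply htri2
    rw [hsx, show Q + a + (Q + b) + (Q + c) = (Q + a + b + c) + (Q + Q) from by abel, hsum1,
      ch2, add_zero]
  · -- Q = a (a renamed to Q)
    exact case1 hε hc P Q b c x y z h0P h0Q h0b h0c h0x h0y h0z hPa hPb hPc hab hac hbc
      hxy hxz hyz hQx hQy hQz hsum1 htri2 hori1 ⟨hs1a, hs1b, hs1c⟩ ⟨hs2x, hs2y, hs2z⟩ huniv1 hneS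
  · -- Q = b (b renamed to Q)
    refine case1 hε hc P Q c a x y z h0P h0Q h0c h0a h0x h0y h0z hPb hPc hPa hbc
      (Ne.symm hab) (Ne.symm hac) hxy hxz hyz hQx hQy hQz hsum1' htri2 hori1'
      ⟨hs1b, hs1c, hs1a⟩ ⟨hs2x, hs2y, hs2z⟩ huniv1' ?_
    intro h
    exact hneS (by
      rw [show (insert P {a, Q, c} : Set V) = insert P {Q, c, a} from by
        ext t; simp only [Set.mem_insert_iff, Set.mem_singleton_iff]; tauto, h])
  · -- Q = c (c renamed to Q)
    refine case1 hε hc P Q a b x y z h0P h0Q h0a h0b h0x h0y h0z hPc hPa hPb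
      (Ne.symm hac) (Ne.symm hbc) hab hxy hxz hyz hQx hQy hQz hsum1'' htri2 hori1''
      ⟨hs1c, hs1a, hs1b⟩ ⟨hs2x, hs2y, hs2z⟩ huniv1'' ?_
    intro h
    exact hneS (by
      rw [show (insert P {a, b, Q} : Set V) = insert P {Q, a, b} from by
        ext t; simp only [Set.mem_insert_iff, Set.mem_singleton_iff]; tauto, h])
  · -- Q = P + a
    exact case2 hε hc P a b c x y z h0P h0a h0b h0c h0x h0y h0z hPa hPb hPc hab hac hbc
      hxy hxz hyz hQx hQy hQz hsum1 htri2 hori1 hori2 ⟨hs1a, hs1b, hs1c⟩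
      ⟨hs2x, hs2y, hs2z⟩ huniv1
  · -- Q = P + b
    exact case2 hε hc P b c a x y z h0P h0b h0c h0a h0x h0y h0z hPb hPc hPa hbc
      (Ne.symm hab) (Ne.symm hac) hxy hxz hyz hQx hQy hQz hsum1' htri2 hori1' hori2
      ⟨hs1b, hs1c, hs1a⟩ ⟨hs2x, hs2y, hs2z⟩ huniv1'
  · -- Q = P + c
    exact case2 hε hc P c a b x y z h0P h0c h0a h0b h0x h0y h0z hPc hPa hPb
      (Ne.symm hac) (Ne.symm hbc) hab hxy hxz hyz hQx hQy hQz hsum1'' htri2 hori1'' hori2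
      ⟨hs1c, hs1a, hs1b⟩ ⟨hs2x, hs2y, hs2z⟩ huniv1''


set_option maxHeartbeats 2000000 in
/-- for distinct quadrilaterals with oriented triangles `T₁ = S₁ \ {P₁}`,
`T₂ = S₂ \ {P₂}` and distinguished points `P₁, P₂`: `ε P₁ R₁ = ε P₂ R₂` for all `R₁ ∈ T₁`,
`R₂ ∈ T₂`. -/
theorem stmt_7 (ε : V → V → ℤ) (hε : IsMulFactor ε) (hc : CompCond ε)
    (S₁ S₂ : Set V) (hS₁ : IsQuad S₁) (hS₂ : IsQuad S₂) (hne : S₁ ≠ S₂)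
    (P₁ P₂ : V) (h₁ : IsDistPt ε S₁ P₁) (h₂ : IsDistPt ε S₂ P₂) :
    ∀ R₁ ∈ S₁ \ {P₁}, ∀ R₂ ∈ S₂ \ {P₂}, ε P₁ R₁ = ε P₂ R₂ := by
  obtain ⟨hP1S, hT1, hO1⟩ := h₁
  obtain ⟨hP2S, hT2, hO2⟩ := h₂
  obtain ⟨a, b, c, hset1, hab, hac, hbc, hoAB, hoBC⟩ := hO1
  obtain ⟨x, y, z, hset2, hxy, hxz, hyz, hoXY, hoYZ⟩ := hO2
  -- memberships and basic facts for the first quadrilateral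
  have haD : a ∈ S₁ \ {P₁} := by rw [hset1]; simp
  have hbD : b ∈ S₁ \ {P₁} := by rw [hset1]; simp
  have hcD : c ∈ S₁ \ {P₁} := by rw [hset1]; simp
  have haS := haD.1
  have hbS := hbD.1
  have hcS := hcD.1
  have hP1a : P₁ ≠ a := fun h => haD.2 (by simp [h.symm])
  have hP1b : P₁ ≠ b := fun h => hbD.2 (by simp [h.symm])
  have hP1c : P₁ ≠ c := fun h => hcD.2 (by simp [h.symm])
  have h0P1 : P₁ ≠ 0 := quadNonzero S₁ hS₁ P₁ hP1S
  have h0a : a ≠ 0 := quadNonzero S₁ hS₁ a haS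
  have h0b : b ≠ 0 := quadNonzero S₁ hS₁ b hbS
  have h0c : c ≠ 0 := quadNonzero S₁ hS₁ c hcS
  have S1eq : S₁ = insert P₁ {a, b, c} := by
    rw [← hset1, Set.insert_diff_singleton]
    exact (Set.insert_eq_self.mpr hP1S).symm
  -- memberships and basic facts for the second quadrilateral
  have hxD : x ∈ S₂ \ {P₂} := by rw [hset2]; simp
  have hyD : y ∈ S₂ \ {P₂} := by rw [hset2]; simp
  have hzD : z ∈ S₂ \ {P₂} := by rw [hset2]; simp
  have hxS := hxD.1
  have hyS := hyD.1
  have hzS := hzD.1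
  have hP2x : P₂ ≠ x := fun h => hxD.2 (by simp [h.symm])
  have hP2y : P₂ ≠ y := fun h => hyD.2 (by simp [h.symm])
  have hP2z : P₂ ≠ z := fun h => hzD.2 (by simp [h.symm])
  have h0P2 : P₂ ≠ 0 := quadNonzero S₂ hS₂ P₂ hP2S
  have h0x : x ≠ 0 := quadNonzero S₂ hS₂ x hxS
  have h0y : y ≠ 0 := quadNonzero S₂ hS₂ y hyS
  have h0z : z ≠ 0 := quadNonzero S₂ hS₂ z hzS
  have S2eq : S₂ = insert P₂ {x, y, z} := by
    rw [← hset2, Set.insert_diff_singleton]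
    exact (Set.insert_eq_self.mpr hP2S).symm
  -- the complement-line points of S₁ are outside S₁
  have hnab : P₁ + a ≠ b := fun h => noline S₁ hS₁ P₁ a hP1S haS hP1a (by rw [h]; exact hbS)
  have hnac : P₁ + a ≠ c := fun h => noline S₁ hS₁ P₁ a hP1S haS hP1a (by rw [h]; exact hcS)
  have hnba : P₁ + b ≠ a := fun h => noline S₁ hS₁ P₁ b hP1S hbS hP1b (by rw [h]; exact haS)
  have hnbc : P₁ + b ≠ c := fun h => noline S₁ hS₁ P₁ b hP1S hbS hP1b (by rw [h]; exact hcS)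
  have hnca : P₁ + c ≠ a := fun h => noline S₁ hS₁ P₁ c hP1S hcS hP1c (by rw [h]; exact haS)
  have hncb : P₁ + c ≠ b := fun h => noline S₁ hS₁ P₁ c hP1S hcS hP1c (by rw [h]; exact hbS)
  have huniv8 := huniv P₁ a b c h0P1 h0a h0b h0c hP1a hP1b hP1c hab hac hbc
    hnab hnac hnba hnbc hnca hncb
  -- the sum of the four points of the first quadrilateral vanishes
  have hAB := noline S₁ hS₁ a b haS hbS hab
  have hsum1 : P₁ + a + b + c = 0 := by
    rcases huniv8 (a + b) with h|h|h|h|h|h|h|h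
    · exact ((hab (eqd _ _ h))).elim
    · exact (hAB (by rw [h]; exact hP1S)).elim
    · exact (h0b (add_left_cancel (show a + b = a + 0 by rw [add_zero]; exact h))).elim
    · exact (h0a (add_right_cancel (show a + b = 0 + b by rw [zero_add]; exact h))).elim
    · exact (hAB (by rw [h]; exact hcS)).elim
    · exact (hP1b (add_left_cancel (h.trans (add_comm P₁ a))).symm).elim
    · exact (hP1a (add_right_cancel h).symm).elim
    · rw [show P₁ + a + b + c = (a + b) + (P₁ + c) from by abel, h]
      exact ch2 _
  -- the triangle sums are nonzero
  have htri1 : a + b + c ≠ 0 := by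
    obtain ⟨u, v, w, _, _, _, huv, huw, hvw, hsumT, hTset⟩ := hT1
    have hseq : ({a, b, c} : Set V) = {u, v, w} := hset1.symm.trans hTset
    have mema : a = u ∨ a = v ∨ a = w := by
      have : a ∈ ({u, v, w} : Set V) := by rw [← hseq]; simp
      simpa using this
    have memb : b = u ∨ b = v ∨ b = w := by
      have : b ∈ ({u, v, w} : Set V) := by rw [← hseq]; simp
      simpa using this
    have memc : c = u ∨ c = v ∨ c = w := by
      have : c ∈ ({u, v, w} : Set V) := by rw [← hseq]; simp
      simpa using this
    rw [sum3 a b c u v w hab hac hbc mema memb memc]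
    exact hsumT
  have htri2 : x + y + z ≠ 0 := by
    obtain ⟨u, v, w, _, _, _, huv, huw, hvw, hsumT, hTset⟩ := hT2
    have hseq : ({x, y, z} : Set V) = {u, v, w} := hset2.symm.trans hTset
    have memx : x = u ∨ x = v ∨ x = w := by
      have : x ∈ ({u, v, w} : Set V) := by rw [← hseq]; simp
      simpa using this
    have memy : y = u ∨ y = v ∨ y = w := by
      have : y ∈ ({u, v, w} : Set V) := by rw [← hseq]; simp
      simpa using this
    have memz : z = u ∨ z = v ∨ z = w := by
      have : z ∈ ({u, v, w} : Set V) := by rw [← hseq]; simp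
      simpa using this
    rw [sum3 x y z u v w hxy hxz hyz memx memy memz]
    exact hsumT
  -- per-quadrilateral constancy of ε P₁ · on the triangle
  have hquad1 : IsQuad {P₁, a, b, c} := S1eq ▸ hS₁
  have hquad2 : IsQuad {P₂, x, y, z} := S2eq ▸ hS₂
  obtain ⟨hpq1a, hpq1b⟩ := perquad hε hc P₁ a b c h0P1 h0a h0b h0c hP1a hP1b hP1c hab hac hbc
    hquad1 ⟨hoAB, hoBC⟩
  obtain ⟨hpq2a, hpq2b⟩ := perquad hε hc P₂ x y z h0P2 h0x h0y h0z hP2x hP2y hP2z hxy hxz hyz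
    hquad2 ⟨hoXY, hoYZ⟩
  intro R₁ hR₁ R₂ hR₂
  rw [hset1] at hR₁
  rw [hset2] at hR₂
  simp only [Set.mem_insert_iff, Set.mem_singleton_iff] at hR₁ hR₂
  have hv1 : ε P₁ R₁ = ε P₁ a := by
    rcases hR₁ with h|h|h
    · rw [h]
    · rw [h]; exact hpq1a.symm
    · rw [h]; exact hpq1b.symm
  have hv2 : ε P₂ R₂ = ε P₂ x := by
    rcases hR₂ with h|h|h
    · rw [h]
    · rw [h]; exact hpq2a.symm
    · rw [h]; exact hpq2b.symm
  rw [hv1, hv2]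
  have hneS : (insert P₁ {a, b, c} : Set V) ≠ insert P₂ {x, y, z} :=
    fun h => hne (S1eq.trans (h.trans S2eq.symm))
  rcases val hε P₁ a h0P1 h0a hP1a with h1|h1 <;> rcases val hε P₂ x h0P2 h0x hP2x with h2|h2
  · rw [h1, h2]
  · -- σ₁ = 1, σ₂ = -1 : impossible
    exact (key hε hc P₁ a b c P₂ x y z h0P1 h0a h0b h0c h0P2 h0x h0y h0z
      hP1a hP1b hP1c hab hac hbc hxy hxz hyz hP2x hP2y hP2z hsum1 htri2
      ⟨hoAB, hoBC⟩ ⟨hoXY, hoYZ⟩ ⟨h1, by omega, by omega⟩ ⟨h2, by omega, by omega⟩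
      huniv8 hneS).elim
  · -- σ₁ = -1, σ₂ = 1 : apply the key lemma to -ε
    have hε' : IsMulFactor (fun u v => -(ε u v)) := by
      constructor
      · intro U W hu hw huw
        obtain ⟨hv, ha⟩ := hε.1 U W hu hw huw
        exact ⟨by show -(ε U W) = 1 ∨ -(ε U W) = -1; omega,
          by show -(ε W U) = -(-(ε U W)); omega⟩
      · intro U W h
        show -(ε U W) = 0
        rw [hε.2 U W h]; ring
    have hc' : CompCond (fun u v => -(ε u v)) := by
      constructor
      · intro U W X hu hw hx huw hux hwx hsum
        show -(ε U W) * -(ε W X) = 1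
        rw [neg_mul_neg]
        exact hc.1 U W X hu hw hx huw hux hwx hsum
      · intro U W X Y hu hw hx hy h1' h2' h3' h4' h5' h6' hq
        show -(ε U W) * -(ε W X) * -(ε X Y) * -(ε Y U) = -1
        have hr : -(ε U W) * -(ε W X) * -(ε X Y) * -(ε Y U)
            = ε U W * ε W X * ε X Y * ε Y U := by ring
        rw [hr]
        exact hc.2 U W X Y hu hw hx hy h1' h2' h3' h4' h5' h6' hq
    exact (key hε' hc' P₁ a b c P₂ x y z h0P1 h0a h0b h0c h0P2 h0x h0y h0z
      hP1a hP1b hP1c hab hac hbc hxy hxz hyz hP2x hP2y hP2z hsum1 htri2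
      ⟨by show -(ε a b) = -(ε b c); omega, by show -(ε b c) = -(ε c a); omega⟩
      ⟨by show -(ε x y) = -(ε y z); omega, by show -(ε y z) = -(ε z x); omega⟩
      ⟨by show -(ε P₁ a) = 1; omega, by show -(ε P₁ b) = 1; omega,
        by show -(ε P₁ c) = 1; omega⟩
      ⟨by show -(ε P₂ x) = -1; omega, by show -(ε P₂ y) = -1; omega,
        by show -(ε P₂ z) = -1; omega⟩
      huniv8 hneS).elim
  · rw [h1, h2]
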